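/- Let U be a finite semigroup, S a subsemigroup, x ∈ S with x' ∈ U satisfying x x' x = x, and y ∈ U. Then y R^S x if and only if: y R^U x, L_y^U and L_x^U lie in the same strongly connected component of the right action of S on L^U-classes, and for some (equivalently any) v ∈ S^1 with L_y^U · v = L_x^U, the map on L_x^U induced by x'yv lies in the group S_{L_x^U}. -/
import Mathlib


variable {U : Type*}

/-- Green's R-relation relative to a set `T` of multipliers (`T = S` gives `R^S`,
`T = Set.univ` gives `R^U`): `x R y` iff `x ∈ y T^1` and `y ∈ x T^1`. -/
def GreenR [Mul U] (T : Set U) (x y : U) : Prop :=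
  (x = y ∨ ∃ a ∈ T, x * a = y) ∧ (y = x ∨ ∃ a ∈ T, y * a = x)

/-- Green's L-relation relative to a set `T` of multipliers. -/
def GreenL [Mul U] (T : Set U) (x y : U) : Prop :=
  (x = y ∨ ∃ a ∈ T, a * x = y) ∧ (y = x ∨ ∃ a ∈ T, a * y = x)

/-- Green's H-relation relative to `T`. -/
def GreenH [Mul U] (T : Set U) (x y : U) : Prop :=
  GreenL T x y ∧ GreenR T x y

/-- Green's D-relation relative to `T` (for finite semigroups, `D = R ∘ L`). -/
def GreenD [Mul U] (T : Set U) (x y : U) : Prop :=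
  ∃ z, GreenR T x z ∧ GreenL T z y

/-- The `L^U`-class of `x` in the ambient semigroup `U`. -/
def Lcl [Mul U] (x : U) : Set U := {y | GreenL Set.univ x y}

/-- The `R^U`-class of `x` in the ambient semigroup `U`. -/
def RclU [Mul U] (x : U) : Set U := {y | GreenR Set.univ x y}

/-- The `R`-class of `x` relative to multipliers from `T`. -/
def Rcl [Mul U] (T : Set U) (x : U) : Set U := {y | GreenR T x y}

/-- `L_a^U` reaches `L_b^U` under the right action of `T^1` on `L^U`-classes
given by `L_a · s = L_{a s}`. -/
def reachC [Mul U] (T : Set U) (a b : U) : Prop :=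
  Lcl a = Lcl b ∨ ∃ s ∈ T, Lcl (a * s) = Lcl b

/-- `R_a^U` reaches `R_b^U` under the left action of `T^1` on `R^U`-classes. -/
def reachCL [Mul U] (T : Set U) (a b : U) : Prop :=
  RclU a = RclU b ∨ ∃ s ∈ T, RclU (s * a) = RclU b

/-- The right action of `S^1` (identity adjoined, encoded as `Option ↥S`) on `U`. -/
def act1 [Mul U] (S : Subsemigroup U) (u : U) (o : Option ↥S) : U :=
  o.elim u (fun s => u * (s : U))

/-- The left action of `S^1` on `U`. -/
def act1L [Mul U] (S : Subsemigroup U) (o : Option ↥S) (u : U) : U :=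
  o.elim u (fun s => (s : U) * u)

/-- The stabiliser `Stab_S(L_x^U)` of the `L^U`-class of `x` under the right
action of `S^1` on subsets of `U`. -/
def StabOfL [Mul U] (S : Subsemigroup U) (x : U) : Set (Option ↥S) :=
  {o | (fun y => act1 S y o) '' Lcl x = Lcl x}

/-- The stabiliser `Stab_S(R_x^U)` of the `R^U`-class of `x` under the left
action of `S^1` on subsets of `U`. -/
def StabOfR [Mul U] (S : Subsemigroup U) (x : U) : Set (Option ↥S) :=
  {o | (fun y => act1L S o y) '' RclU x = RclU x}

section aux
variable [Semigroup U]

private def pw (t : U) : ℕ → U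
  | 0 => t
  | n+1 => pw t n * t

private lemma pw_succ (t : U) (k : ℕ) : pw t (k + 1) = pw t k * t := rfl

private lemma pw_comm (t : U) (k : ℕ) : t * pw t k = pw t k * t := by
  induction k with
  | zero => rfl
  | succ k ih => show t * (pw t k * t) = _; rw [← mul_assoc, ih]; rfl

private lemma pw_mul_pw (t : U) (i m : ℕ) : pw t i * pw t m = pw t (i + m + 1) := by
  induction m with
  | zero => rfl
  | succ m ih => show pw t i * (pw t m * t) = _; rw [← mul_assoc, ih]; rfl

private lemma pw_mem (S : Subsemigroup U) {t : U} (ht : t ∈ S) (n : ℕ) : pw t n ∈ S := by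
  induction n with
  | zero => exact ht
  | succ n ih => exact S.mul_mem ih ht

private lemma greenL_refl (a : U) : GreenL (Set.univ : Set U) a a := ⟨Or.inl rfl, Or.inl rfl⟩

private lemma greenL_symm {a b : U} (h : GreenL (Set.univ : Set U) a b) :
    GreenL (Set.univ : Set U) b a := ⟨h.2, h.1⟩

private lemma greenL_trans {a b c : U} (h1 : GreenL (Set.univ : Set U) a b)
    (h2 : GreenL (Set.univ : Set U) b c) : GreenL (Set.univ : Set U) a c := by
  obtain ⟨h1l, h1r⟩ := h1
  obtain ⟨h2l, h2r⟩ := h2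
  constructor
  · rcases h1l with rfl | ⟨p, -, hp⟩
    · exact h2l
    · rcases h2l with rfl | ⟨q, -, hq⟩
      · exact Or.inr ⟨p, Set.mem_univ _, hp⟩
      · exact Or.inr ⟨q * p, Set.mem_univ _, by rw [mul_assoc, hp, hq]⟩
  · rcases h2r with rfl | ⟨p, -, hp⟩
    · exact h1r
    · rcases h1r with rfl | ⟨q, -, hq⟩
      · exact Or.inr ⟨p, Set.mem_univ _, hp⟩
      · exact Or.inr ⟨q * p, Set.mem_univ _, by rw [mul_assoc, hp, hq]⟩

private lemma Lcl_eq_iff {a b : U} : Lcl a = Lcl b ↔ GreenL (Set.univ : Set U) a b := by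
  constructor
  · intro h
    have hb : b ∈ Lcl a := by rw [h]; exact greenL_refl b
    exact hb
  · intro h
    ext z
    exact ⟨fun hz => greenL_trans (greenL_symm h) hz, fun hz => greenL_trans h hz⟩

private lemma greenL_mul_right {a b : U} (h : GreenL (Set.univ : Set U) a b) (t : U) :
    GreenL (Set.univ : Set U) (a * t) (b * t) := by
  obtain ⟨hl, hr⟩ := h
  constructor
  · rcases hl with rfl | ⟨p, -, hp⟩
    · exact Or.inl rfl
    · exact Or.inr ⟨p, Set.mem_univ _, by rw [← mul_assoc, hp]⟩
  · rcases hr with rfl | ⟨p, -, hp⟩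
    · exact Or.inl rfl
    · exact Or.inr ⟨p, Set.mem_univ _, by rw [← mul_assoc, hp]⟩

private lemma Lcl_mul_right {a b : U} (h : Lcl a = Lcl b) (t : U) :
    Lcl (a * t) = Lcl (b * t) :=
  Lcl_eq_iff.mpr (greenL_mul_right (Lcl_eq_iff.mp h) t)

private lemma Lcl_pw {a t : U} (h : Lcl (a * t) = Lcl a) :
    ∀ k, Lcl (a * pw t k) = Lcl a := by
  intro k
  induction k with
  | zero => exact h
  | succ k ih =>
    have h1 : a * pw t (k+1) = (a * pw t k) * t := by
      show a * (pw t k * t) = _; rw [mul_assoc]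
    rw [h1, Lcl_mul_right ih t, h]

private lemma lclA [Finite U] {a t : U} (h : Lcl (a * t) = Lcl a) :
    ∃ m, a * pw t m = a := by
  have hab : GreenL (Set.univ : Set U) (a * t) a := Lcl_eq_iff.mp h
  rcases hab.1 with he | ⟨p, -, hp⟩
  · exact ⟨0, he⟩
  · -- hp : p * (a * t) = a
    have key : ∀ k, pw p k * (a * pw t k) = a := by
      intro k
      induction k with
      | zero => exact hp
      | succ k ih =>
        have h1 : a * pw t (k+1) = (a * t) * pw t k := by
          show a * (pw t k * t) = _
          rw [← pw_comm, ← mul_assoc]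
        show (pw p k * p) * (a * pw t (k+1)) = a
        rw [h1, mul_assoc, ← mul_assoc p, hp, ih]
    obtain ⟨i, j, hne, heq⟩ := Finite.exists_ne_map_eq_of_infinite (fun n : ℕ => pw t n)
    rcases Nat.lt_or_ge i j with hij | hij
    · refine ⟨j - i - 1, ?_⟩
      have hj : i + (j - i - 1) + 1 = j := by omega
      have h2 : pw t j = pw t i * pw t (j - i - 1) := by rw [pw_mul_pw, hj]
      have h3 := key i
      calc a * pw t (j - i - 1) = (pw p i * (a * pw t i)) * pw t (j - i - 1) := by rw [h3]
        _ = pw p i * (a * (pw t i * pw t (j - i - 1))) := by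
            rw [mul_assoc, mul_assoc]
        _ = pw p i * (a * pw t j) := by rw [← h2]
        _ = pw p i * (a * pw t i) := by rw [heq]
        _ = a := h3
    · have hji : j < i := by omega
      refine ⟨i - j - 1, ?_⟩
      have hj : j + (i - j - 1) + 1 = i := by omega
      have h2 : pw t i = pw t j * pw t (i - j - 1) := by rw [pw_mul_pw, hj]
      have h3 := key j
      calc a * pw t (i - j - 1) = (pw p j * (a * pw t j)) * pw t (i - j - 1) := by rw [h3]
        _ = pw p j * (a * (pw t j * pw t (i - j - 1))) := by rw [mul_assoc, mul_assoc]
        _ = pw p j * (a * pw t i) := by rw [← h2]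
        _ = pw p j * (a * pw t j) := by rw [← heq]
        _ = a := h3

private lemma fix_of_mem {a z q : U} (hfix : a * q = a) (hz : z ∈ Lcl a) :
    z * q = z := by
  rcases hz.1 with rfl | ⟨p, -, hp⟩
  · exact hfix
  · rw [← hp, mul_assoc, hfix]

private lemma stab_image [Finite U] {a t : U} (h : Lcl (a * t) = Lcl a) :
    (fun z => z * t) '' Lcl a = Lcl a := by
  apply Set.Subset.antisymm
  · rintro _ ⟨z, hz, rfl⟩
    exact greenL_trans (greenL_symm (Lcl_eq_iff.mp h)) (greenL_mul_right hz t)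
  · intro z hz
    obtain ⟨m, hm⟩ := lclA h
    cases m with
    | zero => exact ⟨z, hz, fix_of_mem hm hz⟩
    | succ k =>
      refine ⟨z * pw t k, ?_, ?_⟩
      · have : z * pw t k ∈ Lcl (a * pw t k) := greenL_mul_right hz (pw t k)
        rwa [Lcl_pw h k] at this
      · show (z * pw t k) * t = z
        rw [mul_assoc]
        exact fix_of_mem hm hz

private lemma zfix {x x' z : U} (hx' : x * x' * x = x) (hz : z ∈ Lcl x) :
    z * (x' * x) = z := by
  rcases hz.1 with rfl | ⟨p, -, hp⟩
  · rw [← mul_assoc]; exact hx'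
  · rw [← hp, mul_assoc, ← mul_assoc x, hx']

end aux

/-- Membership test for `R^S`-classes: if `x ∈ S` and `x' ∈ U` satisfies
`x x' x = x`, then for any `y ∈ U` we have `y R^S x` if and only if `y R^U x`,
`L_y^U` and `L_x^U` lie in the same strongly connected component of the right
action of `S` on `L^U`-classes, and for any `v ∈ S^1` with `L_y^U · v = L_x^U`
the map induced on `L_x^U` by `x' y v` lies in the group `S_{L_x^U}` of maps
induced by `Stab_S(L_x^U)`. -/
theorem rclass_membership [Semigroup U] [Finite U] (S : Subsemigroup U)
    (x : U) (hx : x ∈ S) (x' : U) (hx' : x * x' * x = x) (y : U) :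
    GreenR (S : Set U) y x ↔
      (GreenR (Set.univ : Set U) y x ∧
       (reachC (S : Set U) y x ∧ reachC (S : Set U) x y) ∧
       ∀ v : Option ↥S, Lcl (act1 S y v) = Lcl x →
         ∃ o ∈ StabOfL S x, ∀ z ∈ Lcl x, z * (x' * act1 S y v) = act1 S z o) := by
  constructor
  · rintro ⟨h1, h2⟩
    refine ⟨⟨?_, ?_⟩, ⟨?_, ?_⟩, ?_⟩
    · rcases h1 with he | ⟨a, -, ha⟩
      · exact Or.inl he
      · exact Or.inr ⟨a, Set.mem_univ _, ha⟩
    · rcases h2 with he | ⟨a, -, ha⟩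
      · exact Or.inl he
      · exact Or.inr ⟨a, Set.mem_univ _, ha⟩
    · rcases h1 with rfl | ⟨a, ha, hax⟩
      · exact Or.inl rfl
      · exact Or.inr ⟨a, ha, by rw [hax]⟩
    · rcases h2 with rfl | ⟨a, ha, hay⟩
      · exact Or.inl rfl
      · exact Or.inr ⟨a, ha, by rw [hay]⟩
    · intro v hv
      rcases h2 with he | ⟨b, hb, hby⟩
      · subst he
        cases v with
        | none =>
          refine ⟨none, ?_, ?_⟩
          · show (fun z => act1 S z none) '' Lcl x = Lcl x
            simp [act1]
          · intro z hz
            exact zfix hx' hz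
        | some s =>
          have hv' : Lcl (x * (s : U)) = Lcl x := hv
          refine ⟨some s, stab_image hv', ?_⟩
          intro z hz
          show z * (x' * (x * (s : U))) = z * (s : U)
          rw [← mul_assoc x', ← mul_assoc, zfix hx' hz]
      · cases v with
        | none =>
          have hv' : Lcl (x * b) = Lcl x := by rw [hby]; exact hv
          refine ⟨some ⟨b, hb⟩, stab_image hv', ?_⟩
          intro z hz
          show z * (x' * y) = z * b
          rw [← hby, ← mul_assoc x', ← mul_assoc, zfix hx' hz]
        | some s =>
          have hv0 : act1 S y (some s) = x * (b * (s : U)) := by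
            show y * (s : U) = _
            rw [← hby, mul_assoc]
          have hv' : Lcl (x * (b * (s : U))) = Lcl x := by rw [← hv0]; exact hv
          refine ⟨some ⟨b * (s : U), S.mul_mem hb s.2⟩, stab_image hv', ?_⟩
          intro z hz
          show z * (x' * act1 S y (some s)) = z * (b * (s : U))
          rw [hv0, ← mul_assoc x', ← mul_assoc, zfix hx' hz]
  · rintro ⟨hR, ⟨r1, r2⟩, hall⟩
    have hex : ∃ v : Option ↥S, Lcl (act1 S y v) = Lcl x := by
      rcases r1 with h | ⟨s, hs, h⟩
      · exact ⟨none, h⟩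
      · exact ⟨some ⟨s, hs⟩, h⟩
    obtain ⟨v, hv⟩ := hex
    obtain ⟨o, ho, hoz⟩ := hall v hv
    have hxx'y : x * (x' * y) = y := by
      rcases hR.2 with he | ⟨d, -, hd⟩
      · rw [← he, ← mul_assoc]; exact hx'
      · rw [← hd, ← mul_assoc x', ← mul_assoc, ← mul_assoc x x' x, hx']
    have hxw : x * (x' * act1 S y v) = act1 S y v := by
      cases v with
      | none => exact hxx'y
      | some s =>
        show x * (x' * (y * (s : U))) = y * (s : U)
        calc x * (x' * (y * (s : U))) = (x * (x' * y)) * (s : U) := by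
              simp only [mul_assoc]
          _ = y * (s : U) := by rw [hxx'y]
    have hxo : act1 S x o = act1 S y v := by rw [← hoz x (greenL_refl x), hxw]
    have part1 : y = x ∨ ∃ a ∈ (S : Set U), y * a = x := by
      cases o with
      | none =>
        have hxw' : x = act1 S y v := hxo
        cases v with
        | none => exact Or.inl hxw'.symm
        | some s => exact Or.inr ⟨(s : U), s.2, hxw'.symm⟩
      | some s =>
        have hws : x * (s : U) = act1 S y v := hxo
        have hcls : Lcl (x * (s : U)) = Lcl x := by rw [hws]; exact hv
        obtain ⟨m, hm⟩ := lclA hcls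
        cases m with
        | zero =>
          have hwx : x = act1 S y v := by rw [← hws]; exact hm.symm
          cases v with
          | none => exact Or.inl hwx.symm
          | some t => exact Or.inr ⟨(t : U), t.2, hwx.symm⟩
        | succ k =>
          have hx2 : act1 S y v * pw (s : U) k = x := by
            calc act1 S y v * pw (s : U) k = (x * (s : U)) * pw (s : U) k := by rw [hws]
              _ = x * ((s : U) * pw (s : U) k) := by rw [mul_assoc]
              _ = x * pw (s : U) (k + 1) := by rw [pw_comm, pw_succ]
              _ = x := hm
          cases v with
          | none => exact Or.inr ⟨pw (s : U) k, pw_mem S s.2 k, hx2⟩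
          | some t =>
            refine Or.inr ⟨(t : U) * pw (s : U) k, S.mul_mem t.2 (pw_mem S s.2 k), ?_⟩
            rw [← mul_assoc]; exact hx2
    refine ⟨part1, ?_⟩
    rcases part1 with he | ⟨c, hc, hcx⟩
    · exact Or.inl he.symm
    · rcases r2 with h | ⟨u, hu, h⟩
      · have hcl : Lcl (y * c) = Lcl y := by rw [hcx]; exact h
        obtain ⟨m, hm⟩ := lclA hcl
        cases m with
        | zero => exact Or.inl (by rw [← hcx]; exact hm)
        | succ k =>
          refine Or.inr ⟨pw c k, pw_mem S hc k, ?_⟩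
          calc x * pw c k = (y * c) * pw c k := by rw [hcx]
            _ = y * (c * pw c k) := by rw [mul_assoc]
            _ = y * pw c (k + 1) := by rw [pw_comm, pw_succ]
            _ = y := hm
      · have hcl : Lcl (y * (c * u)) = Lcl y := by
          rw [← mul_assoc, hcx]; exact h
        obtain ⟨m, hm⟩ := lclA hcl
        cases m with
        | zero =>
          refine Or.inr ⟨u, hu, ?_⟩
          rw [← hcx, mul_assoc]; exact hm
        | succ k =>
          refine Or.inr ⟨u * pw (c * u) k, S.mul_mem hu (pw_mem S (S.mul_mem hc hu) k), ?_⟩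
          calc x * (u * pw (c * u) k) = (y * c) * (u * pw (c * u) k) := by rw [hcx]
            _ = y * ((c * u) * pw (c * u) k) := by simp only [mul_assoc]
            _ = y * pw (c * u) (k + 1) := by rw [pw_comm, pw_succ]
            _ = y := hm
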